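/- For g = 5, the only sets G ⊆ ℕ of cardinality 5 with 9 ∈ G that are gap sets of numerical semigroups and contain 1, are: {1,2,3,4,9}, {1,2,3,5,9}, and {1,3,5,7,9}. -/
import Mathlib


/-- For `g = 5`: the only sets `G ⊆ ℕ` of cardinality `5` containing `1` and `9` that
are gap sets of numerical semigroups are `{1,2,3,4,9}`, `{1,2,3,5,9}`, `{1,3,5,7,9}`. -/
theorem genus_five_subcanonical_gap_sets
    (G : Set ℕ) (hcard : G.ncard = 5) (h9 : (9 : ℕ) ∈ G) (h1 : (1 : ℕ) ∈ G)
    (h0 : (0 : ℕ) ∈ Gᶜ)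
    (hadd : ∀ a ∈ Gᶜ, ∀ b ∈ Gᶜ, a + b ∈ Gᶜ) :
    G = {1, 2, 3, 4, 9} ∨ G = {1, 2, 3, 5, 9} ∨ G = {1, 3, 5, 7, 9} := by
  have hGfin : G.Finite := by
    by_contra hinf
    rw [Set.Infinite.ncard (by simpa using hinf)] at hcard
    exact absurd hcard (by norm_num)
  have pair : ∀ a b : ℕ, a + b = 9 → a ∈ G ∨ b ∈ G := by
    intro a b hab
    by_contra h
    push_neg at h
    have := hadd a h.1 b h.2
    rw [hab] at this
    exact this h9
  have key : ∀ S : Set ℕ, S ⊆ G → S.ncard = 5 → G = S := by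
    intro S hS hScard
    exact (Set.eq_of_subset_of_ncard_le hS (by omega) hGfin).symm
  have n5 : ∀ (a b c d e : ℕ), a < b → b < c → c < d → d < e →
      ({a, b, c, d, e} : Set ℕ).ncard = 5 := by
    intro a b c d e h1 h2 h3 h4
    rw [show ({a, b, c, d, e} : Set ℕ) = ↑({a, b, c, d, e} : Finset ℕ) by simp]
    rw [Set.ncard_coe_finset]
    rw [Finset.card_insert_of_notMem (by simp; omega),
        Finset.card_insert_of_notMem (by simp; omega),
        Finset.card_insert_of_notMem (by simp; omega),
        Finset.card_insert_of_notMem (by simp; omega),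
        Finset.card_singleton]
  by_cases h2 : 2 ∈ G
  · have h3 : 3 ∈ G := by
      rcases pair 3 6 rfl with h | h
      · exact h
      · by_contra h3
        exact absurd (hadd 3 h3 3 h3) (by simpa using h)
    by_cases h4 : 4 ∈ G
    · left
      refine key _ ?_ (n5 1 2 3 4 9 (by norm_num) (by norm_num) (by norm_num) (by norm_num))
      intro x hx
      simp only [Set.mem_insert_iff, Set.mem_singleton_iff] at hx
      rcases hx with rfl | rfl | rfl | rfl | rfl <;> assumption
    · have h5 : 5 ∈ G := (pair 4 5 rfl).resolve_left h4
      right; left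
      refine key _ ?_ (n5 1 2 3 5 9 (by norm_num) (by norm_num) (by norm_num) (by norm_num))
      intro x hx
      simp only [Set.mem_insert_iff, Set.mem_singleton_iff] at hx
      rcases hx with rfl | rfl | rfl | rfl | rfl <;> assumption
  · have h4 : 4 ∉ G := fun h => h2 (False.elim (hadd 2 h2 2 h2 h))
    have h6 : 6 ∉ G := hadd 2 h2 4 h4
    have h3 : 3 ∈ G := (pair 3 6 rfl).resolve_right h6
    have h5 : 5 ∈ G := (pair 4 5 rfl).resolve_left h4
    have h7 : 7 ∈ G := (pair 2 7 rfl).resolve_left h2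
    right; right
    refine key _ ?_ (n5 1 3 5 7 9 (by norm_num) (by norm_num) (by norm_num) (by norm_num))
    intro x hx
    simp only [Set.mem_insert_iff, Set.mem_singleton_iff] at hx
    rcases hx with rfl | rfl | rfl | rfl | rfl <;> assumption
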